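/- Let (Λ₀, Λ) be a relative category of paths, and for each vertex v of Λ₀ let ℬ_v be a ring of sets on vΛ such that: (i) vΛ ∈ ℬ_v for every vertex v of Λ₀; (ii) {αE : E ∈ ℬ_{s(α)}} ⊆ ℬ_{r(α)} for all α ∈ Λ₀; (iii) {σ^α(E ∩ αΛ) : E ∈ ℬ_{r(α)}} ⊆ ℬ_{s(α)} for all α ∈ Λ₀. Then 𝒜(Λ₀,Λ)_v ⊆ ℬ_v for every vertex v of Λ₀; moreover, for all α ∈ Λ₀, {αE : E ∈ ℬ_{s(α)}} = {E ∩ αΛ : E ∈ ℬ_{r(α)}} and {σ^α(E ∩ αΛ) : E ∈ ℬ_{r(α)}} = ℬ_{s(α)}. -/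

import Mathlib

universe u v

/-- A category of paths: a small category (objects identified with identity
morphisms) with left and right cancellation and no inverses. -/
structure CategoryOfPaths (Λ : Type u) where
  s : Λ → Λ
  r : Λ → Λ
  comp : Λ → Λ → Λ
  s_comp : ∀ {α β : Λ}, s α = r β → s (comp α β) = s β
  r_comp : ∀ {α β : Λ}, s α = r β → r (comp α β) = r α
  comp_assoc : ∀ {α β γ : Λ}, s α = r β → s β = r γ →
    comp (comp α β) γ = comp α (comp β γ)
  id_comp : ∀ α : Λ, comp (r α) α = α
  comp_id : ∀ α : Λ, comp α (s α) = α
  s_r : ∀ α : Λ, s (r α) = r α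
  r_r : ∀ α : Λ, r (r α) = r α
  r_s : ∀ α : Λ, r (s α) = s α
  s_s : ∀ α : Λ, s (s α) = s α
  left_cancel : ∀ {α β γ : Λ}, s α = r β → s α = r γ → comp α β = comp α γ → β = γ
  right_cancel : ∀ {β γ α : Λ}, s β = r α → s γ = r α → comp β α = comp γ α → β = γ
  no_inverses : ∀ {α β : Λ}, s α = r β → comp α β = s β → α = s β ∧ β = s β

variable {Λ : Type u}

/-- The tail set `αΛ`. -/
def pTail (C : CategoryOfPaths Λ) (α : Λ) : Set Λ :=
  {x | ∃ β, C.s α = C.r β ∧ x = C.comp α β}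

/-- `vΛ`, the paths with range `v`. -/
def pRng (C : CategoryOfPaths Λ) (w : Λ) : Set Λ := {α | C.r α = w}

/-- `Λv`, the paths with source `v`. -/
def pSrc (C : CategoryOfPaths Λ) (w : Λ) : Set Λ := {α | C.s α = w}

/-- `[β]`, the initial segments of `β`. -/
def pSeg (C : CategoryOfPaths Λ) (β : Λ) : Set Λ := {α | β ∈ pTail C α}

/-- `α ⋔ β`. -/
def pMeets (C : CategoryOfPaths Λ) (α β : Λ) : Prop :=
  (pTail C α ∩ pTail C β).Nonempty

/-- `αE`. -/
def pMulSet (C : CategoryOfPaths Λ) (α : Λ) (E : Set Λ) : Set Λ :=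
  {x | ∃ β ∈ E, C.s α = C.r β ∧ x = C.comp α β}

/-- `σ^α(E ∩ αΛ)`, computed inside an ambient subcategory `S`. -/
def pShiftIn (C : CategoryOfPaths Λ) (S : Set Λ) (α : Λ) (E : Set Λ) : Set Λ :=
  {β | β ∈ S ∧ C.s α = C.r β ∧ C.comp α β ∈ E}

/-- `σ^α(E ∩ αΛ)`. -/
def pShift (C : CategoryOfPaths Λ) (α : Λ) (E : Set Λ) : Set Λ :=
  {β | C.s α = C.r β ∧ C.comp α β ∈ E}

/-- `⋁F`: the minimal common extensions of `F`. -/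
def pMinExt (C : CategoryOfPaths Λ) (F : Set Λ) : Set Λ :=
  {ε | (∀ α ∈ F, ε ∈ pTail C α) ∧
    ∀ γ, (∀ α ∈ F, γ ∈ pTail C α) → ε ∈ pTail C γ → γ = ε}

/-- `α ∨ β`: the minimal common extensions of `α` and `β`. -/
def pMinCE (C : CategoryOfPaths Λ) (α β : Λ) : Set Λ := pMinExt C {α, β}

/-- A subcategory of a category of paths, as a set of morphisms. -/
structure IsSubcategory (C : CategoryOfPaths Λ) (Λ₀ : Set Λ) : Prop where
  comp_mem : ∀ {α β : Λ}, α ∈ Λ₀ → β ∈ Λ₀ → C.s α = C.r β → C.comp α β ∈ Λ₀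
  s_mem : ∀ {α : Λ}, α ∈ Λ₀ → C.s α ∈ Λ₀
  r_mem : ∀ {α : Λ}, α ∈ Λ₀ → C.r α ∈ Λ₀

/-- A finitely aligned category of paths. -/
def FinitelyAligned (C : CategoryOfPaths Λ) : Prop :=
  ∀ α β : Λ, ∃ G : Set Λ, G.Finite ∧
    pTail C α ∩ pTail C β = ⋃ ε ∈ G, pTail C ε

/-- A finitely aligned relative category of paths `(Λ₀, Λ)`. -/
def RelFinitelyAligned (C : CategoryOfPaths Λ) (Λ₀ : Set Λ) : Prop :=
  (∀ α ∈ Λ₀, ∀ β ∈ Λ₀, ∃ G : Set Λ, G.Finite ∧ G ⊆ Λ₀ ∧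
      pTail C α ∩ pTail C β = ⋃ ε ∈ G, pTail C ε) ∧
  (∀ α ∈ Λ₀, pTail C α ∩ Λ₀ = pMulSet C α Λ₀)

/-- A ring of sets: contains `∅` and is closed under `∪`, `∩`, and `\`. -/
def IsSetRing {γ : Type v} (R : Set (Set γ)) : Prop :=
  ∅ ∈ R ∧ (∀ E ∈ R, ∀ F ∈ R, E ∪ F ∈ R) ∧ (∀ E ∈ R, ∀ F ∈ R, E ∩ F ∈ R) ∧
    (∀ E ∈ R, ∀ F ∈ R, E \ F ∈ R)

/-- A ring of sets on `S`: a ring of sets all of whose members are subsets of `S`. -/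
def IsSetRingOn {γ : Type v} (S : Set γ) (R : Set (Set γ)) : Prop :=
  IsSetRing R ∧ ∀ E ∈ R, E ⊆ S

/-- The ring of sets generated by a collection. -/
def setRingGen {γ : Type v} (G : Set (Set γ)) : Set (Set γ) :=
  ⋂₀ {R | IsSetRing R ∧ G ⊆ R}

/-- The ring of sets on `S` generated by a collection. -/
def setRingGenOn {γ : Type v} (S : Set γ) (G : Set (Set γ)) : Set (Set γ) :=
  ⋂₀ {R | IsSetRingOn S R ∧ G ⊆ R}

/-- A zigzag: a list of pairs `(αᵢ, βᵢ)` with `r αᵢ = r βᵢ` and `s αᵢ₊₁ = s βᵢ`. -/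
def IsZigzag (C : CategoryOfPaths Λ) (l : List (Λ × Λ)) : Prop :=
  (∀ p ∈ l, C.r p.1 = C.r p.2) ∧ l.Chain' (fun p q => C.s q.1 = C.s p.2)

/-- The (graph of the) zigzag map `φ_ζ = σ^{α₁} β₁ ⋯ σ^{αₙ} βₙ`, computed
inside an ambient subcategory `S`. -/
def zigzagRelIn (C : CategoryOfPaths Λ) (S : Set Λ) : List (Λ × Λ) → Λ → Λ → Prop
  | [], x, y => x = y ∧ x ∈ S
  | p :: rest, x, y => ∃ z, zigzagRelIn C S rest x z ∧ C.s p.2 = C.r z ∧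
      C.s p.1 = C.r y ∧ y ∈ S ∧ C.comp p.2 z = C.comp p.1 y

/-- `A(ζ)`: the domain of the zigzag map. -/
def zigzagDomIn (C : CategoryOfPaths Λ) (S : Set Λ) (l : List (Λ × Λ)) : Set Λ :=
  {x | ∃ y, zigzagRelIn C S l x y}

/-- `𝒟(Λ₀,Λ)⁰_v`: nonempty zigzag sets with entries in `Λ₀` and source `v`,
computed inside the ambient subcategory `S`. -/
def relD0 (C : CategoryOfPaths Λ) (Λ₀ S : Set Λ) (w : Λ) : Set (Set Λ) :=
  {E | E.Nonempty ∧ ∃ (l : List (Λ × Λ)) (h : l ≠ []),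
    IsZigzag C l ∧ (∀ p ∈ l, p.1 ∈ Λ₀ ∧ p.2 ∈ Λ₀) ∧
    C.s (l.getLast h).2 = w ∧ E = zigzagDomIn C S l}

/-- `𝒜(Λ₀,Λ)_v`: the ring of sets generated by the zigzag sets. -/
def relAring (C : CategoryOfPaths Λ) (Λ₀ S : Set Λ) (w : Λ) : Set (Set Λ) :=
  setRingGenOn {α | α ∈ S ∧ C.r α = w} (relD0 C Λ₀ S w)

/-- A filter in a ring of sets. -/
def IsFilterIn {γ : Type v} (R U : Set (Set γ)) : Prop :=
  U.Nonempty ∧ U ⊆ R ∧ (∀ E ∈ U, E.Nonempty) ∧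
    (∀ E ∈ U, ∀ F ∈ U, E ∩ F ∈ U) ∧ (∀ E ∈ U, ∀ F ∈ R, E ⊆ F → F ∈ U)

/-- An ultrafilter in a ring of sets: a maximal filter. -/
def IsUltrafilterIn {γ : Type v} (R U : Set (Set γ)) : Prop :=
  IsFilterIn R U ∧ ∀ V, IsFilterIn R V → U ⊆ V → V = U

/-- A filter base in a ring of sets. -/
def IsFilterBaseIn {γ : Type v} (R B : Set (Set γ)) : Prop :=
  B.Nonempty ∧ B ⊆ R ∧ (∀ E ∈ B, E.Nonempty) ∧
    ∀ E ∈ B, ∀ F ∈ B, ∃ G ∈ B, G ⊆ E ∩ F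

/-- The filter generated by a filter base. -/
def filterGenBy {γ : Type v} (R B : Set (Set γ)) : Set (Set γ) :=
  {E | E ∈ R ∧ ∃ F ∈ B, F ⊆ E}

/-- An ultrafilter base in a ring of sets. -/
def IsUltrafilterBaseIn {γ : Type v} (R B : Set (Set γ)) : Prop :=
  IsFilterBaseIn R B ∧ IsUltrafilterIn R (filterGenBy R B)

/-- A Boolean ring homomorphism defined on a ring of sets `A` with values in a
generalized Boolean algebra. -/
def IsBRHomOn {γ : Type v} {R : Type*} [GeneralizedBooleanAlgebra R]
    (A : Set (Set γ)) (ν : Set γ → R) : Prop :=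
  ν ∅ = ⊥ ∧ (∀ E ∈ A, ∀ F ∈ A, ν (E ∪ F) = ν E ⊔ ν F) ∧
    (∀ E ∈ A, ∀ F ∈ A, ν (E ∩ F) = ν E ⊓ ν F) ∧
    (∀ E ∈ A, ∀ F ∈ A, ν (E \ F) = ν E \ ν F)

/-- `𝒜_v`: the ring of sets on `vΛ` generated by the tail sets. -/
def tailRing (C : CategoryOfPaths Λ) (w : Λ) : Set (Set Λ) :=
  setRingGenOn (pRng C w) {E | ∃ α, C.r α = w ∧ E = pTail C α}

/-- A directed subset. -/
def pDirected (C : CategoryOfPaths Λ) (x : Set Λ) : Prop :=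
  ∀ α ∈ x, ∀ β ∈ x, (pTail C α ∩ pTail C β ∩ x).Nonempty

/-- A hereditary subset. -/
def pHereditary (C : CategoryOfPaths Λ) (x : Set Λ) : Prop :=
  ∀ γ ∈ x, ∀ α : Λ, γ ∈ pTail C α → α ∈ x

/-- `vΛ*`: the nonempty directed hereditary subsets of `vΛ`. -/
def lamStar (C : CategoryOfPaths Λ) (w : Λ) : Set (Set Λ) :=
  {x | x.Nonempty ∧ x ⊆ pRng C w ∧ pDirected C x ∧ pHereditary C x}

/-- `vΛ**`: the maximal directed subsets of `vΛ`. -/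
def lamStarStar (C : CategoryOfPaths Λ) (w : Λ) : Set (Set Λ) :=
  {x | x ⊆ pRng C w ∧ pDirected C x ∧
    ∀ y, y ⊆ pRng C w → pDirected C y → x ⊆ y → y = x}

/-- `αx = ⋃_{γ ∈ x} [αγ]` for `x ∈ s(α)Λ*`. -/
def pMulStar (C : CategoryOfPaths Λ) (α : Λ) (x : Set Λ) : Set Λ :=
  {δ | ∃ γ ∈ x, C.s α = C.r γ ∧ C.comp α γ ∈ pTail C δ}

/-- `𝒰_{C,0}`. -/
def UC0 (C : CategoryOfPaths Λ) (w : Λ) (x : Set Λ) : Set (Set Λ) :=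
  {E | E ∈ tailRing C w ∧ ∃ α ∈ x, pTail C α ⊆ E}

/-- `𝒰_C`. -/
def UC (C : CategoryOfPaths Λ) (w : Λ) (x : Set Λ) : Set (Set Λ) :=
  {E | E ∈ tailRing C w ∧ ∃ α ∈ x, x ∩ pTail C α ⊆ E}

/-- `X_v = vΛ*` as a type. -/
abbrev Xv (C : CategoryOfPaths Λ) (w : Λ) : Type u := {x : Set Λ // x ∈ lamStar C w}

/-- The topology on `X_v` generated by the sets `Ê`, `E ∈ 𝒜_v`. -/
def XvTop (C : CategoryOfPaths Λ) (w : Λ) : TopologicalSpace (Xv C w) :=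
  TopologicalSpace.generateFrom
    {t | ∃ E ∈ tailRing C w, t = {x : Xv C w | E ∈ UC C w x.1}}

/-- The vertices of `Λ`. -/
abbrev Vertex (C : CategoryOfPaths Λ) : Type u := {w : Λ // C.r w = w}

/-- `X`: the disjoint union of the spaces `X_v`. -/
abbrev Xtotal (C : CategoryOfPaths Λ) : Type u := Σ w : Vertex C, Xv C w.1

/-- The disjoint union topology on `X`. -/
def XtotalTop (C : CategoryOfPaths Λ) : TopologicalSpace (Xtotal C) :=
  letI : ∀ w : Vertex C, TopologicalSpace (Xv C w.1) := fun w => XvTop C w.1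
  inferInstance

/-- The boundary `∂Λ`: the closure of `Λ**` in `X`. -/
def boundarySet (C : CategoryOfPaths Λ) : Set (Xtotal C) :=
  @closure _ (XtotalTop C) {p : Xtotal C | p.2.1 ∈ lamStarStar C p.1.1}

/-- An exhaustive subset of `vΛ`. -/
def ExhaustiveAt (C : CategoryOfPaths Λ) (w : Λ) (F : Set Λ) : Prop :=
  ∀ α, C.r α = w → ∃ β ∈ F, pMeets C α β

/-- An aperiodic point of `Λ*`. -/
def pAperiodic (C : CategoryOfPaths Λ) (x : Set Λ) : Prop :=
  ∀ α ∈ x, ∀ β ∈ x, α ≠ β → pShift C α x ≠ pShift C β x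

/-- A right-aperiodic point of `wΛ*`. -/
def pRightAperiodicAt (C : CategoryOfPaths Λ) (w : Λ) (x : Set Λ) : Prop :=
  ∀ α β : Λ, C.s α = w → C.s β = w → α ≠ β → pMulStar C α x ≠ pMulStar C β x

/-- The triples `(α, β, x)` with `s α = s β` and `x ∈ s(α)Λ*`. -/
abbrev pTrip (C : CategoryOfPaths Λ) : Type u :=
  {t : Λ × Λ × Set Λ // C.s t.1 = C.s t.2.1 ∧ t.2.2 ∈ lamStar C (C.s t.1)}

/-- The groupoid equivalence relation on triples. -/
def tripRel (C : CategoryOfPaths Λ) (t t' : pTrip C) : Prop :=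
  ∃ (z : Set Λ) (δ δ' : Λ),
    z ∈ lamStar C (C.s δ) ∧ z ∈ lamStar C (C.s δ') ∧
    C.s t.1.1 = C.r δ ∧ C.s t'.1.1 = C.r δ' ∧
    t.1.2.2 = pMulStar C δ z ∧ t'.1.2.2 = pMulStar C δ' z ∧
    C.comp t.1.1 δ = C.comp t'.1.1 δ' ∧
    C.comp t.1.2.1 δ = C.comp t'.1.2.1 δ'

/-- The ultrafilter space of `𝒜(Λ₀,Λ)_v`. -/
abbrev relXv (C : CategoryOfPaths Λ) (Λ₀ : Set Λ) (w : Λ) : Type u :=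
  {U : Set (Set Λ) // IsUltrafilterIn (relAring C Λ₀ Set.univ w) U}

/-- The topology on the ultrafilter space of `𝒜(Λ₀,Λ)_v` generated by the `Ê`. -/
def relXvTop (C : CategoryOfPaths Λ) (Λ₀ : Set Λ) (w : Λ) :
    TopologicalSpace (relXv C Λ₀ w) :=
  TopologicalSpace.generateFrom
    {t | ∃ E ∈ relAring C Λ₀ Set.univ w, t = {U : relXv C Λ₀ w | E ∈ U.1}}

section Aux

lemma zigzagRelIn_concat (C : CategoryOfPaths Λ) (p : Λ × Λ) :
    ∀ (l : List (Λ × Λ)) (x w : Λ),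
      zigzagRelIn C Set.univ (l ++ [p]) x w ↔
        ∃ y, C.s p.2 = C.r x ∧ C.s p.1 = C.r y ∧
          C.comp p.2 x = C.comp p.1 y ∧ zigzagRelIn C Set.univ l y w := by
  intro l
  induction l with
  | nil =>
    intro x w
    simp only [List.nil_append, zigzagRelIn, Set.mem_univ, and_true, true_and]
    constructor
    · rintro ⟨z, rfl, h1, h2, h3⟩
      exact ⟨w, h1, h2, h3, rfl⟩
    · rintro ⟨y, h1, h2, h3, rfl⟩
      exact ⟨x, rfl, h1, h2, h3⟩
  | cons q t ih =>
    intro x w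
    simp only [List.cons_append, zigzagRelIn, Set.mem_univ, and_true, true_and]
    constructor
    · rintro ⟨z, hz, hq2, hq1, hc⟩
      rcases (ih x z).1 hz with ⟨y, h1, h2, h3, h4⟩
      exact ⟨y, h1, h2, h3, z, h4, hq2, hq1, hc⟩
    · rintro ⟨y, h1, h2, h3, z, h4, hq2, hq1, hc⟩
      exact ⟨z, (ih x z).2 ⟨y, h1, h2, h3, h4⟩, hq2, hq1, hc⟩

lemma zigzagDomIn_concat (C : CategoryOfPaths Λ) (p : Λ × Λ) (l : List (Λ × Λ)) :
    zigzagDomIn C Set.univ (l ++ [p]) =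
      pShift C p.2 (pMulSet C p.1 (zigzagDomIn C Set.univ l)) := by
  ext x
  simp only [zigzagDomIn, Set.mem_setOf_eq, pShift, pMulSet]
  constructor
  · rintro ⟨w, hw⟩
    rcases (zigzagRelIn_concat C p l x w).1 hw with ⟨y, h1, h2, h3, h4⟩
    exact ⟨h1, y, ⟨w, h4⟩, h2, h3⟩
  · rintro ⟨h1, y, ⟨w, hw⟩, h2, h3⟩
    exact ⟨w, (zigzagRelIn_concat C p l x w).2 ⟨y, h1, h2, h3, hw⟩⟩

lemma zigzagDomIn_nil (C : CategoryOfPaths Λ) :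
    zigzagDomIn C Set.univ ([] : List (Λ × Λ)) = Set.univ := by
  ext x
  simp [zigzagDomIn, zigzagRelIn]

lemma pMulSet_univ (C : CategoryOfPaths Λ) (α : Λ) :
    pMulSet C α Set.univ = pMulSet C α (pRng C (C.s α)) := by
  ext x
  constructor
  · rintro ⟨β, -, h1, h2⟩
    exact ⟨β, h1.symm, h1, h2⟩
  · rintro ⟨β, -, h1, h2⟩
    exact ⟨β, trivial, h1, h2⟩

lemma pMulSet_pShift (C : CategoryOfPaths Λ) (α : Λ) (E : Set Λ) :
    pMulSet C α (pShift C α E) = E ∩ pTail C α := by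
  ext x
  constructor
  · rintro ⟨β, ⟨h0, hE⟩, h1, rfl⟩
    exact ⟨hE, β, h1, rfl⟩
  · rintro ⟨hE, β, h1, rfl⟩
    exact ⟨β, ⟨h1, hE⟩, h1, rfl⟩

lemma pShift_pMulSet (C : CategoryOfPaths Λ) (α : Λ) (E : Set Λ)
    (hE : E ⊆ pRng C (C.s α)) :
    pShift C α (pMulSet C α E) = E := by
  ext β
  constructor
  · rintro ⟨h1, γ, hγ, h2, h3⟩
    rwa [C.left_cancel h1 h2 h3]
  · intro hβ
    have hr : C.s α = C.r β := (hE hβ).symm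
    exact ⟨hr, β, hβ, hr, rfl⟩

lemma pMulSet_subset_pTail (C : CategoryOfPaths Λ) (α : Λ) (E : Set Λ) :
    pMulSet C α E ⊆ pTail C α := by
  rintro x ⟨β, -, h1, h2⟩
  exact ⟨β, h1, h2⟩

end Aux

lemma zigzagDom_mem {Λ : Type u} (C : CategoryOfPaths Λ) (Λ₀ : Set Λ)
    (hsub : IsSubcategory C Λ₀) (B : Λ → Set (Set Λ))
    (h1 : ∀ v, v ∈ Λ₀ → C.r v = v → pRng C v ∈ B v)
    (h2 : ∀ α ∈ Λ₀, ∀ E ∈ B (C.s α), pMulSet C α E ∈ B (C.r α))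
    (h3 : ∀ α ∈ Λ₀, ∀ E ∈ B (C.r α), pShift C α E ∈ B (C.s α)) :
    ∀ (l : List (Λ × Λ)), l ≠ [] → IsZigzag C l →
      (∀ p ∈ l, p.1 ∈ Λ₀ ∧ p.2 ∈ Λ₀) →
      ∀ p, l.getLast? = some p → zigzagDomIn C Set.univ l ∈ B (C.s p.2) := by
  intro l
  induction l using List.reverseRecOn with
  | nil => simp
  | append_singleton t q ih =>
    intro _ hzz hent p' hp'
    obtain rfl : p' = q := by symm; simpa [List.getLast?_concat] using hp'
    have hq : p'.1 ∈ Λ₀ ∧ p'.2 ∈ Λ₀ := hent p' (by simp)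
    have hrr : C.r p'.1 = C.r p'.2 := hzz.1 p' (by simp)
    rw [zigzagDomIn_concat]
    have hmul : pMulSet C p'.1 (zigzagDomIn C Set.univ t) ∈ B (C.r p'.1) := by
      rcases eq_or_ne t [] with rfl | ht
      · rw [zigzagDomIn_nil, pMulSet_univ]
        exact h2 p'.1 hq.1 _ (h1 _ (hsub.s_mem hq.1) (C.r_s p'.1))
      · have hch := List.isChain_append.1 hzz.2
        have hdom := ih ht ⟨fun r hr => hzz.1 r (by simp [hr]),
            hch.1⟩ (fun r hr => hent r (by simp [hr]))
            (t.getLast ht) (List.getLast?_eq_getLast ht)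
        have hlink : C.s p'.1 = C.s (t.getLast ht).2 := by
          have := hch.2.2 (t.getLast ht)
            (by simp [List.getLast?_eq_getLast ht]) p' (by simp)
          exact this
        rw [← hlink] at hdom
        exact h2 p'.1 hq.1 _ hdom
    rw [hrr] at hmul
    exact h3 p'.2 hq.2 _ hmul

/-- Proposition 2.10. If `ℬ_v` is a family of rings of sets
on the `vΛ` containing the `vΛ` and invariant under right and left shifts by
elements of `Λ₀`, then `𝒜(Λ₀,Λ)_v ⊆ ℬ_v` for all vertices `v` of `Λ₀`;
moreover `αℬ_{s(α)} = {E ∩ αΛ : E ∈ ℬ_{r(α)}}` and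
`σ^α ℬ_{r(α)} = ℬ_{s(α)}` for all `α ∈ Λ₀`. -/
theorem statement3 {Λ : Type u} (C : CategoryOfPaths Λ) (Λ₀ : Set Λ)
    (hsub : IsSubcategory C Λ₀) (B : Λ → Set (Set Λ))
    (hring : ∀ v, v ∈ Λ₀ → C.r v = v → IsSetRingOn (pRng C v) (B v))
    (h1 : ∀ v, v ∈ Λ₀ → C.r v = v → pRng C v ∈ B v)
    (h2 : ∀ α ∈ Λ₀, ∀ E ∈ B (C.s α), pMulSet C α E ∈ B (C.r α))
    (h3 : ∀ α ∈ Λ₀, ∀ E ∈ B (C.r α), pShift C α E ∈ B (C.s α)) :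
    (∀ v, v ∈ Λ₀ → C.r v = v → relAring C Λ₀ Set.univ v ⊆ B v) ∧
    (∀ α ∈ Λ₀, (pMulSet C α) '' B (C.s α)
        = {X | ∃ E ∈ B (C.r α), X = E ∩ pTail C α}) ∧
    (∀ α ∈ Λ₀, (pShift C α) '' B (C.r α) = B (C.s α)) := by
  refine ⟨?_, ?_, ?_⟩
  · intro v hv hrv E hE
    have hB := hring v hv hrv
    refine hE (B v) ⟨⟨hB.1, fun F hF x hx => ⟨trivial, hB.2 F hF hx⟩⟩, ?_⟩
    rintro F ⟨hne, l, hl, hzz, hent, hlast, rfl⟩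
    have hd := zigzagDom_mem C Λ₀ hsub B h1 h2 h3 l hl hzz hent
      (l.getLast hl) (List.getLast?_eq_getLast hl)
    rwa [hlast] at hd
  · intro α hα
    ext X
    constructor
    · rintro ⟨E, hE, rfl⟩
      exact ⟨pMulSet C α E, h2 α hα E hE,
        (Set.inter_eq_left.2 (pMulSet_subset_pTail C α E)).symm⟩
    · rintro ⟨E, hE, rfl⟩
      exact ⟨pShift C α E, h3 α hα E hE, pMulSet_pShift C α E⟩
  · intro α hα
    ext F
    constructor
    · rintro ⟨E, hE, rfl⟩
      exact h3 α hα E hE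
    · intro hF
      exact ⟨pMulSet C α F, h2 α hα F hF,
        pShift_pMulSet C α F ((hring _ (hsub.s_mem hα) (C.r_s α)).2 F hF)⟩
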